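/- Fix Δ ≥ 2 and consider the infinite complete Δ-ary tree T_{Δ,0}. For each finite prefix-closed set A ⊆ List (Fin Δ) containing the empty list, define for a ∈ A the set B_a = { a ++ [i] : i : Fin Δ } \ A of children of a that are not in A, and define S_A = { B_a : a ∈ A, B_a ≠ ∅ }. Then: (i) S_A is a sweep-cover of T_{Δ,0} with |S_A| ≤ |A|; and (ii) the map A ↦ S_A is injective on the family of finite prefix-closed subsets containing the empty list. Hence every such set of internal nodes (equivalently, every Raney tree of type (1, Δ, k+1) with its degree-1 root removed) determines a distinct sweep-cover of T_{Δ,0}. -/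

import Mathlib

/-- A rooted tree: no edge enters the root, every non-root vertex has a unique parent,
and every vertex is reachable from the root. -/
structure IsRootedTree {V : Type*} (E : V → V → Prop) (r : V) : Prop where
  not_edge_root : ∀ u, ¬ E u r
  unique_parent : ∀ v, v ≠ r → ∃! u, E u v
  reachable : ∀ v, Relation.ReflTransGen E r v

/-- A sweep-cover of a rooted tree `(V, E, r)`. -/
structure IsSweepCover {V : Type*} (E : V → V → Prop) (r : V) (S : Set (Set V)) : Prop where
  finite : S.Finite
  mem_finite : ∀ T ∈ S, T.Finite
  mem_nonempty : ∀ T ∈ S, T.Nonempty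
  pairwiseDisjoint : ∀ T ∈ S, ∀ T' ∈ S, T ≠ T' → Disjoint T T'
  siblings : ∀ T ∈ S, T = {r} ∨ ∃ p, ∀ v ∈ T, E p v
  covers : ∀ v : V, (∃ T ∈ S, v ∈ T) ∨ (∃ w ∈ ⋃₀ S, Relation.TransGen E v w) ∨
      (∃ w ∈ ⋃₀ S, Relation.TransGen E w v)
  antichain : ∀ u ∈ ⋃₀ S, ∀ v ∈ ⋃₀ S, u ≠ v → ¬ Relation.TransGen E u v

/-- The edge relation of the infinite complete `Δ`-ary tree on `List (Fin Δ)`: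
`w` is a child of `v` iff `w = v ++ [i]` for some `i : Fin Δ`. -/
def aryEdge (Δ : ℕ) (v w : List (Fin Δ)) : Prop :=
  ∃ i : Fin Δ, w = v ++ [i]

/-- For a set `A` of vertices and `a ∈ A`, the set `B_a` of children of `a` not in `A`. -/
def childBlock (Δ : ℕ) (A : Set (List (Fin Δ))) (a : List (Fin Δ)) : Set (List (Fin Δ)) :=
  {w | ∃ i : Fin Δ, w = a ++ [i]} \ A

/-- The collection `S_A = { B_a : a ∈ A, B_a ≠ ∅ }`. -/
def sweepOfInternal (Δ : ℕ) (A : Set (List (Fin Δ))) : Set (Set (List (Fin Δ))) :=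
  {B | ∃ a ∈ A, B = childBlock Δ A a ∧ B ≠ ∅}

lemma transGen_append (Δ : ℕ) (u : List (Fin Δ)) :
    ∀ t : List (Fin Δ), t ≠ [] → Relation.TransGen (aryEdge Δ) u (u ++ t) := by
  intro t
  induction t using List.reverseRecOn with
  | nil => intro h; exact absurd rfl h
  | append_singleton t i ih =>
    intro _
    rcases eq_or_ne t [] with rfl | ht
    · simpa using Relation.TransGen.single (⟨i, rfl⟩ : aryEdge Δ u (u ++ [i]))
    · exact (ih ht).tail ⟨i, by rw [List.append_assoc]⟩

lemma transGen_iff (Δ : ℕ) (u v : List (Fin Δ)) :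
    Relation.TransGen (aryEdge Δ) u v ↔ u <+: v ∧ u ≠ v := by
  constructor
  · intro h
    induction h with
    | single h =>
      obtain ⟨i, rfl⟩ := h
      refine ⟨List.prefix_append _ _, fun he => ?_⟩
      have := congrArg List.length he
      simp at this
    | tail _ h ih =>
      obtain ⟨i, rfl⟩ := h
      refine ⟨ih.1.trans (List.prefix_append _ _), fun he => ?_⟩
      have h1 := ih.1.length_le
      have h2 := congrArg List.length he
      simp at h2
      omega
  · rintro ⟨⟨t, rfl⟩, hne⟩
    exact transGen_append Δ u t (by rintro rfl; simp at hne)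

lemma mem_sUnion_sweep {Δ : ℕ} {A : Set (List (Fin Δ))} {w : List (Fin Δ)} :
    w ∈ ⋃₀ sweepOfInternal Δ A ↔ ∃ a ∈ A, w ∈ childBlock Δ A a := by
  constructor
  · rintro ⟨B, ⟨a, ha, rfl, -⟩, hw⟩
    exact ⟨a, ha, hw⟩
  · rintro ⟨a, ha, hw⟩
    exact ⟨childBlock Δ A a, ⟨a, ha, rfl, Set.nonempty_iff_ne_empty.mp ⟨w, hw⟩⟩, hw⟩

lemma exists_frontier {Δ : ℕ} {A : Set (List (Fin Δ))} (hA : A.Finite)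
    (hroot : ([] : List (Fin Δ)) ∈ A) {v : List (Fin Δ)} (hv : v ∉ A) :
    ∃ w ∈ ⋃₀ sweepOfInternal Δ A, w <+: v := by
  have hPfin : ({u ∈ A | u <+: v}).Finite := hA.subset (fun u hu => hu.1)
  obtain ⟨u, hu, hmax⟩ := hPfin.exists_maximalFor List.length _ ⟨[], hroot, List.nil_prefix⟩
  obtain ⟨t, rfl⟩ := hu.2
  have ht : t ≠ [] := by rintro rfl; exact hv (by simpa using hu.1)
  obtain ⟨i, t', rfl⟩ := List.exists_cons_of_ne_nil ht
  refine ⟨u ++ [i], ?_, ⟨t', by simp⟩⟩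
  refine mem_sUnion_sweep.mpr ⟨u, hu.1, ⟨i, rfl⟩, ?_⟩
  intro hmem
  have := hmax (j := u ++ [i]) ⟨hmem, ⟨t', by simp⟩⟩ (by simp)
  simp at this

lemma mem_iff_forall {Δ : ℕ} {A : Set (List (Fin Δ))} (hA : A.Finite)
    (hroot : ([] : List (Fin Δ)) ∈ A)
    (hpc : ∀ a ∈ A, ∀ b : List (Fin Δ), b <+: a → b ∈ A) (v : List (Fin Δ)) :
    v ∈ A ↔ ∀ w ∈ ⋃₀ sweepOfInternal Δ A, ¬ w <+: v := by
  constructor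
  · intro hv w hw hpre
    obtain ⟨a, ha, hwc⟩ := mem_sUnion_sweep.mp hw
    exact hwc.2 (hpc v hv w hpre)
  · intro h
    by_contra hv
    obtain ⟨w, hw, hpre⟩ := exists_frontier hA hroot hv
    exact h w hw hpre

/-- In the infinite complete `Δ`-ary tree `T_{Δ,0}`, every finite
prefix-closed set `A` of vertices containing the root `[]` determines a sweep-cover
`S_A = { B_a : a ∈ A, B_a ≠ ∅ }` with `|S_A| ≤ |A|`, and the assignment `A ↦ S_A` is
injective on finite prefix-closed sets containing `[]`. -/
theorem prefixClosed_sets_give_distinct_sweepCovers (Δ : ℕ) (hΔ : 2 ≤ Δ) :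
    (∀ A : Set (List (Fin Δ)), A.Finite → ([] : List (Fin Δ)) ∈ A →
        (∀ a ∈ A, ∀ b : List (Fin Δ), b <+: a → b ∈ A) →
        IsSweepCover (aryEdge Δ) ([] : List (Fin Δ)) (sweepOfInternal Δ A) ∧
        (sweepOfInternal Δ A).ncard ≤ A.ncard) ∧
    (∀ A A' : Set (List (Fin Δ)),
        A.Finite → ([] : List (Fin Δ)) ∈ A →
        (∀ a ∈ A, ∀ b : List (Fin Δ), b <+: a → b ∈ A) →
        A'.Finite → ([] : List (Fin Δ)) ∈ A' →
        (∀ a ∈ A', ∀ b : List (Fin Δ), b <+: a → b ∈ A') →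
        sweepOfInternal Δ A = sweepOfInternal Δ A' → A = A') := by
  constructor
  · intro A hA hroot hpc
    refine ⟨⟨?_, ?_, ?_, ?_, ?_, ?_, ?_⟩, ?_⟩
    · exact (hA.image (childBlock Δ A)).subset
        (by rintro B ⟨a, ha, rfl, -⟩; exact ⟨a, ha, rfl⟩)
    · rintro T ⟨a, ha, rfl, -⟩
      exact ((Set.finite_range (fun i : Fin Δ => a ++ [i])).subset
        (by rintro w ⟨i, rfl⟩; exact ⟨i, rfl⟩)).subset Set.diff_subset
    · rintro T ⟨a, ha, rfl, hne⟩
      exact Set.nonempty_iff_ne_empty.mpr hne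
    · rintro T ⟨a, ha, rfl, -⟩ T' ⟨a', ha', rfl, -⟩ hne
      have haa : a ≠ a' := by rintro rfl; exact hne rfl
      refine Set.disjoint_left.mpr ?_
      rintro x ⟨⟨i, rfl⟩, -⟩ ⟨⟨j, hj⟩, -⟩
      exact haa (List.append_inj' hj rfl).1
    · rintro T ⟨a, ha, rfl, -⟩
      exact Or.inr ⟨a, fun v hv => by obtain ⟨⟨i, rfl⟩, -⟩ := hv; exact ⟨i, rfl⟩⟩
    · intro v
      by_cases hv : v ∈ A
      · have hDfin : ({a ∈ A | v <+: a}).Finite := hA.subset (fun a h => h.1)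
        obtain ⟨a, ha, hmax⟩ := hDfin.exists_maximalFor List.length _
          ⟨v, hv, List.prefix_refl v⟩
        have i0 : Fin Δ := ⟨0, by omega⟩
        have hchild : (a ++ [i0]) ∉ A := by
          intro hi
          have := hmax (j := a ++ [i0]) ⟨hi, ha.2.trans (List.prefix_append _ _)⟩ (by simp)
          simp at this
        refine Or.inr (Or.inl ⟨a ++ [i0],
          mem_sUnion_sweep.mpr ⟨a, ha.1, ⟨i0, rfl⟩, hchild⟩, ?_⟩)
        refine (transGen_iff Δ v _).mpr ⟨ha.2.trans (List.prefix_append _ _), fun he => ?_⟩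
        have h1 := ha.2.length_le
        have h2 := congrArg List.length he
        simp at h2
        omega
      · obtain ⟨w, hw, hpre⟩ := exists_frontier hA hroot hv
        rcases eq_or_ne w v with rfl | hne
        · obtain ⟨B, hB, hwB⟩ := hw
          exact Or.inl ⟨B, hB, hwB⟩
        · exact Or.inr (Or.inr ⟨w, hw, (transGen_iff Δ w v).mpr ⟨hpre, hne⟩⟩)
    · intro u hu v hv hne htg
      obtain ⟨hpre, -⟩ := (transGen_iff Δ u v).mp htg
      obtain ⟨a, ha, ⟨i, rfl⟩, -⟩ := mem_sUnion_sweep.mp hv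
      obtain ⟨a', ha', -, huA⟩ := mem_sUnion_sweep.mp hu
      have hlen : u.length ≤ a.length := by
        have h1 := hpre.length_le
        have h2 : u.length ≠ (a ++ [i]).length := by
          intro h
          exact hne (List.IsPrefix.eq_of_length hpre h)
        simp at h1 h2 ⊢
        omega
      have : u <+: a :=
        List.prefix_of_prefix_length_le hpre (List.prefix_append a [i]) hlen
      exact huA (hpc a ha u this)
    · calc (sweepOfInternal Δ A).ncard
          ≤ (childBlock Δ A '' A).ncard :=
            Set.ncard_le_ncard (by rintro B ⟨a, ha, rfl, -⟩; exact ⟨a, ha, rfl⟩)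
              (hA.image _)
        _ ≤ A.ncard := Set.ncard_image_le hA
  · intro A A' hA hroot hpc hA' hroot' hpc' hSS
    ext v
    rw [mem_iff_forall hA hroot hpc v, mem_iff_forall hA' hroot' hpc' v, hSS]
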